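/- Let μ be a Borel probability measure on C([0,1]) with support Γ. Assume: (a) g((0,1)) ⊆ (0,1) for every g ∈ Γ; (b) there exist g₀, g₁ ∈ Γ with g₀(0) ∈ (0,1) and g₁(1) ∈ (0,1). Then every μ-invariant Borel probability measure ν on [0,1] satisfies ν({0}) = ν({1}) = 0. -/

import Mathlib

open MeasureTheory

/-- The topological support of a Borel measure. -/
def msupport {X : Type*} [TopologicalSpace X] [MeasurableSpace X] (μ : Measure X) : Set X :=
  {x | ∀ U : Set X, IsOpen U → x ∈ U → 0 < μ U}

/-- In a second countable space with Borel σ-algebra, the complement of the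
support of a measure is null. -/
theorem msupport_compl_null {X : Type*} [TopologicalSpace X]
    [SecondCountableTopology X]
    [MeasurableSpace X] [BorelSpace X] (μ : Measure X) :
    μ (msupport μ)ᶜ = 0 := by
  classical
  set S : Set (Set X) := {U | IsOpen U ∧ μ U = 0} with hS
  obtain ⟨T, hTc, hTS, hTU⟩ := TopologicalSpace.isOpen_sUnion_countable S (fun s hs => hs.1)
  have hsub : (msupport μ)ᶜ ⊆ ⋃₀ S := by
    intro x hx
    simp only [msupport, Set.mem_compl_iff, Set.mem_setOf_eq, not_forall] at hx
    obtain ⟨U, hUo, hxU, hU0⟩ := hx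
    exact ⟨U, ⟨hUo, by simpa using hU0⟩, hxU⟩
  have : μ (⋃₀ S) = 0 := by
    rw [← hTU]
    exact (measure_sUnion_null_iff hTc).2 fun s hs => (hTS hs).2
  exact measure_mono_null hsub this

/-- Let `μ` be a Borel probability measure on `C([0,1])` with support `Γ`. If every
`g ∈ Γ` maps `(0,1)` into `(0,1)`, and there are `g₀, g₁ ∈ Γ` with `g₀(0) ∈ (0,1)`
and `g₁(1) ∈ (0,1)`, then every `μ`-invariant Borel probability measure `ν` satisfies
`ν({0}) = ν({1}) = 0`. -/
theorem stmt_11 {mC : MeasurableSpace C(unitInterval, unitInterval)}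
    [BorelSpace C(unitInterval, unitInterval)]
    (μ : Measure C(unitInterval, unitInterval)) [IsProbabilityMeasure μ]
    (ha : ∀ g ∈ msupport μ,
      (g : unitInterval → unitInterval) '' Set.Ioo 0 1 ⊆ Set.Ioo 0 1)
    (hb : ∃ g₀ ∈ msupport μ, (g₀ : unitInterval → unitInterval) 0 ∈ Set.Ioo (0:unitInterval) 1)
    (hb' : ∃ g₁ ∈ msupport μ, (g₁ : unitInterval → unitInterval) 1 ∈ Set.Ioo (0:unitInterval) 1)
    (ν : Measure unitInterval) [IsProbabilityMeasure ν]
    (hinv : ∀ A : Set unitInterval, MeasurableSet A →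
      ν A = ∫⁻ g, ν ((g : unitInterval → unitInterval) ⁻¹' A) ∂μ) :
    ν {0} = 0 ∧ ν {1} = 0 := by
  classical
  have h01 : (0 : unitInterval) ≠ 1 := by
    intro h
    have := congrArg Subtype.val h
    norm_num at this
  set A : Set unitInterval := {0, 1} with hA
  have hAmeas : MeasurableSet A :=
    (measurableSet_singleton _).union (measurableSet_singleton _)
  have hmemA : ∀ x : unitInterval, x ∉ Set.Ioo (0:unitInterval) 1 → x ∈ A := by
    intro x hx
    simp only [Set.mem_Ioo, not_and_or, not_lt] at hx
    rcases hx with h | h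
    · left
      exact le_antisymm h (by exact_mod_cast x.2.1)
    · right
      exact le_antisymm (by exact_mod_cast x.2.2) h
  have hpre : ∀ g ∈ msupport μ, (g : unitInterval → unitInterval) ⁻¹' A ⊆ A := by
    intro g hg x hx
    apply hmemA
    intro hxI
    have hgx : (g : unitInterval → unitInterval) x ∈ Set.Ioo (0:unitInterval) 1 :=
      ha g hg ⟨x, hxI, rfl⟩
    rcases hx with h0 | h1
    · rw [h0] at hgx; exact lt_irrefl _ hgx.1
    · rw [Set.mem_singleton_iff.mp h1] at hgx; exact lt_irrefl _ hgx.2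
  have hsupp_null : μ (msupport μ)ᶜ = 0 := msupport_compl_null μ
  have hae : ∀ᵐ g ∂μ, g ∈ msupport μ := by
    rw [MeasureTheory.ae_iff]
    exact hsupp_null
  -- main lemma
  have main : ∀ e : unitInterval, e ∈ A →
      (∃ g ∈ msupport μ, (g : unitInterval → unitInterval) e ∈ Set.Ioo (0:unitInterval) 1) →
      ν A ≤ ν (A \ {e}) := by
    rintro e heA ⟨g₀, hg₀, hg₀e⟩
    set U : Set C(unitInterval, unitInterval) :=
      (fun g : C(unitInterval, unitInterval) => (g : unitInterval → unitInterval) e) ⁻¹'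
        Set.Ioo (0:unitInterval) 1 with hU
    have hUopen : IsOpen U :=
      isOpen_Ioo.preimage (continuous_eval_const e)
    have hUmeas : MeasurableSet U := hUopen.measurableSet
    have hUpos : 0 < μ U := hg₀ U hUopen hg₀e
    set b := ν (A \ {e}) with hb2
    set a := ν A with ha2
    set h : C(unitInterval, unitInterval) → ENNReal :=
      fun g => U.indicator (fun _ => b) g + Uᶜ.indicator (fun _ => a) g with hh
    have hle : (fun g : C(unitInterval, unitInterval) =>
        ν ((g : unitInterval → unitInterval) ⁻¹' A)) ≤ᵐ[μ] h := by
      filter_upwards [hae] with g hg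
      by_cases hgU : g ∈ U
      · have hge : (g : unitInterval → unitInterval) e ∈ Set.Ioo (0:unitInterval) 1 := hgU
        have hsub : (g : unitInterval → unitInterval) ⁻¹' A ⊆ A \ {e} := by
          intro x hx
          refine ⟨hpre g hg hx, fun hxe => ?_⟩
          rw [Set.mem_singleton_iff.mp hxe] at hx
          rcases hx with h0 | h1
          · rw [h0] at hge; exact lt_irrefl _ hge.1
          · rw [Set.mem_singleton_iff.mp h1] at hge; exact lt_irrefl _ hge.2
        have hhg : h g = b := by
          simp [hh, Set.indicator_of_mem hgU,
            Set.indicator_of_notMem (Set.notMem_compl_iff.mpr hgU)]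
        rw [hhg]
        exact measure_mono hsub
      · have hhg : h g = a := by
          simp [hh, Set.indicator_of_notMem hgU,
            Set.indicator_of_mem (Set.mem_compl hgU)]
        rw [hhg]
        exact measure_mono (hpre g hg)
    have hint : ∫⁻ g, h g ∂μ = b * μ U + a * μ Uᶜ := by
      rw [hh]
      rw [lintegral_add_left (measurable_const.indicator hUmeas)]
      rw [lintegral_indicator_const hUmeas, lintegral_indicator_const hUmeas.compl]
    have hkey : a ≤ b * μ U + a * μ Uᶜ := by
      calc a = ∫⁻ g, ν ((g : unitInterval → unitInterval) ⁻¹' A) ∂μ := hinv A hAmeas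
        _ ≤ ∫⁻ g, h g ∂μ := lintegral_mono_ae hle
        _ = b * μ U + a * μ Uᶜ := hint
    have hane : a ≠ ⊤ := measure_ne_top ν A
    have hUne : μ U ≠ ⊤ := measure_ne_top μ U
    have htot : μ U + μ Uᶜ = 1 := by
      rw [← measure_union (disjoint_compl_right) hUmeas.compl, Set.union_compl_self,
        measure_univ]
    have hsplit : a = a * μ U + a * μ Uᶜ := by
      rw [← mul_add, htot, mul_one]
    have h2 : a * μ U + a * μ Uᶜ ≤ b * μ U + a * μ Uᶜ := by
      rw [← hsplit]; exact hkey
    have h3 : a * μ U ≤ b * μ U :=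
      ENNReal.le_of_add_le_add_right (by exact ENNReal.mul_ne_top hane (measure_ne_top μ Uᶜ)) h2
    exact (ENNReal.mul_le_mul_iff_left (ne_of_gt hUpos) hUne).mp h3
  have hsum : ν A = ν {0} + ν {1} := by
    rw [hA, Set.insert_eq,
      measure_union (Set.disjoint_singleton.mpr h01) (measurableSet_singleton _)]
  constructor
  · have h0 : ν A ≤ ν (A \ {0}) := main 0 (by simp [hA]) hb
    rw [hA, Set.pair_diff_left h01] at h0
    rw [← hA] at h0
    rw [hsum] at h0
    have := ENNReal.le_of_add_le_add_right (measure_ne_top ν {1})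
      (by simpa using h0 : ν {0} + ν {1} ≤ 0 + ν {1})
    simpa using this
  · have h1 : ν A ≤ ν (A \ {1}) := main 1 (by simp [hA]) hb'
    rw [hA, Set.pair_diff_right h01] at h1
    rw [← hA] at h1
    rw [hsum] at h1
    have h1' : ν {1} + ν {0} ≤ 0 + ν {0} := by
      rw [add_comm (ν {0})] at h1; simpa using h1
    have := ENNReal.le_of_add_le_add_right (measure_ne_top ν {0}) h1'
    simpa using this
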